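/- The elliptic curve E_{p,r} : y^2 = x^3 + (p^2+4)W x^2 - 4(19p+41)(p^2+4)W^2 x - 4(p^2+4)^2(16p+199)W^3 over Q(p,r) has j-invariant equal to (p^2 + 228p + 496)^3 / (p - 11)^5. -/
import Mathlib


/-- The field `ℚ(p, r)` realized as `RatFunc (RatFunc ℚ)`,
with `p` the inner variable and `r` the outer variable. -/
noncomputable abbrev Kpr : Type := RatFunc (RatFunc ℚ)

noncomputable def pv : Kpr := RatFunc.C RatFunc.X

noncomputable def rv : Kpr := RatFunc.X

/-- `W = W_{p,r} = 16(p²+4)r³ + 4(p²+4)r² - 4(19p+41)r - 16p - 199`. -/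
noncomputable def Wv : Kpr :=
  16 * (pv ^ 2 + 4) * rv ^ 3 + 4 * (pv ^ 2 + 4) * rv ^ 2 - 4 * (19 * pv + 41) * rv -
    16 * pv - 199

/-- The curve `E_{p,r} : y² = x³ + (p²+4)Wx² - 4(19p+41)(p²+4)W²x - 4(p²+4)²(16p+199)W³`. -/
noncomputable def Epr : WeierstrassCurve Kpr :=
  { a₁ := 0, a₂ := (pv ^ 2 + 4) * Wv, a₃ := 0,
    a₄ := -4 * (19 * pv + 41) * (pv ^ 2 + 4) * Wv ^ 2,
    a₆ := -4 * (pv ^ 2 + 4) ^ 2 * (16 * pv + 199) * Wv ^ 3 }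

/-- The j-invariant of `E_{p,r}` equals `(p² + 228p + 496)³ / (p - 11)⁵`. -/
theorem j_invariant_Epr [Epr.IsElliptic] :
    Epr.j = (pv ^ 2 + 228 * pv + 496) ^ 3 / (pv - 11) ^ 5 := by
  have hΔ : Epr.Δ ≠ 0 := Epr.isUnit_Δ.ne_zero
  have hX : (RatFunc.X - 11 : RatFunc ℚ) ≠ 0 := by
    have : ((Polynomial.X - Polynomial.C 11 : Polynomial ℚ)) ≠ 0 :=
      Polynomial.X_sub_C_ne_zero 11
    simpa [RatFunc.algebraMap_X, map_sub] using RatFunc.algebraMap_ne_zero this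
  have hp : (pv - 11 : Kpr) ≠ 0 := by
    have : pv - 11 = (RatFunc.C (RatFunc.X - 11 : RatFunc ℚ) : Kpr) := by
      simp [pv, map_sub, map_ofNat]
    rw [this]
    exact fun h => hX (RatFunc.C.injective (by simpa using h))
  have hp5 : ((pv - 11 : Kpr)) ^ 5 ≠ 0 := pow_ne_zero _ hp
  rw [WeierstrassCurve.j, Units.val_inv_eq_inv_val, WeierstrassCurve.coe_Δ',
    inv_mul_eq_div, div_eq_div_iff hΔ hp5]
  simp only [WeierstrassCurve.c₄, WeierstrassCurve.Δ, WeierstrassCurve.b₂,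
    WeierstrassCurve.b₄, WeierstrassCurve.b₆, WeierstrassCurve.b₈, Epr]
  ring
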